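/- Let x : [0,T] → ℝ^N and v_i : [0,T] → ℝ^N (1 ≤ i ≤ k) be C¹ solutions of the modified shrinking-dimer saddle dynamics dx/dt = β X̃(x, v₁,...,v_k), dv_i/dt = γ Ṽ_i(x, v₁,...,v_k, l), dl/dt = -l, where X̃ and Ṽ_i are globally Lipschitz with constants Q₀ and Q₂ (the latter up to an additive Q₂ l₀² term), and with initial data satisfying ‖x₀‖² + ∑_i ‖v_{i,0}‖² ≤ r₀². Then there is an increasing function S(β, γ) with S(0,0) = (‖x₀‖² + ∑‖v_{i,0}‖²)^{1/2} such that (‖x(t)‖² + ∑_{i=1}^k ‖v_i(t)‖²)^{1/2} ≤ S(β, γ) for all t ∈ [0,T]; in particular, for β, γ small enough, the solution stays in the ball of radius (‖x₀‖² + ∑‖v_{i,0}‖²)^{1/2} + ε₀. -/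

import Mathlib

open scoped BigOperators RealInnerProductSpace


open Set Real

set_option synthInstance.maxHeartbeats 400000
set_option maxHeartbeats 1000000


namespace Stmt8Aux

variable {N k : ℕ}

noncomputable def pk (a : EuclideanSpace ℝ (Fin N)) (b : Fin k → EuclideanSpace ℝ (Fin N)) :
    PiLp 2 (fun _ : Fin (k + 1) => EuclideanSpace ℝ (Fin N)) :=
  (PiLp.continuousLinearEquiv 2 ℝ (fun _ : Fin (k + 1) => EuclideanSpace ℝ (Fin N))).symm
    (Fin.cons a b)

lemma norm_pk (a : EuclideanSpace ℝ (Fin N)) (b : Fin k → EuclideanSpace ℝ (Fin N)) :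
    ‖pk a b‖ = Real.sqrt (‖a‖ ^ 2 + ∑ i, ‖b i‖ ^ 2) := by
  rw [pk, PiLp.norm_eq_of_L2]
  congr 1
  rw [Fin.sum_univ_succ]
  simp [PiLp.coe_symm_continuousLinearEquiv, PiLp.toLp_apply]

lemma pk_add (a a' : EuclideanSpace ℝ (Fin N)) (b b' : Fin k → EuclideanSpace ℝ (Fin N)) :
    pk a b + pk a' b' = pk (a + a') (fun i => b i + b' i) := by
  rw [pk, pk, pk, ← map_add]
  congr 1
  funext i
  refine Fin.cases ?_ ?_ i <;> simp

lemma pk_sub (a a' : EuclideanSpace ℝ (Fin N)) (b b' : Fin k → EuclideanSpace ℝ (Fin N)) :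
    pk a b - pk a' b' = pk (a - a') (fun i => b i - b' i) := by
  rw [pk, pk, pk, ← map_sub]
  congr 1
  funext i
  refine Fin.cases ?_ ?_ i <;> simp

lemma pk_smul (σ : ℝ) (a : EuclideanSpace ℝ (Fin N)) (b : Fin k → EuclideanSpace ℝ (Fin N)) :
    σ • pk a b = pk (σ • a) (fun i => σ • b i) := by
  rw [pk, pk, ← map_smul]
  congr 1
  funext i
  refine Fin.cases ?_ ?_ i <;> simp

lemma pk_zero : pk (0 : EuclideanSpace ℝ (Fin N)) (fun _ : Fin k => (0 : EuclideanSpace ℝ (Fin N))) = 0 := by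
  rw [pk]
  have : (Fin.cons (0 : EuclideanSpace ℝ (Fin N)) (fun _ : Fin k => (0 : EuclideanSpace ℝ (Fin N)))) =
      (0 : ∀ _ : Fin (k+1), EuclideanSpace ℝ (Fin N)) := by
    funext i; refine Fin.cases ?_ ?_ i <;> simp
  rw [this, map_zero]

lemma hasDerivAt_pk {f : ℝ → EuclideanSpace ℝ (Fin N)} {g : Fin k → ℝ → EuclideanSpace ℝ (Fin N)}
    {a : EuclideanSpace ℝ (Fin N)} {b : Fin k → EuclideanSpace ℝ (Fin N)} {t : ℝ}
    (hf : HasDerivAt f a t) (hg : ∀ i, HasDerivAt (g i) (b i) t) :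
    HasDerivAt (fun s => pk (f s) (fun i => g i s)) (pk a b) t := by
  have h1 : HasDerivAt (fun s => (Fin.cons (f s) (fun i => g i s) : ∀ _ : Fin (k+1), EuclideanSpace ℝ (Fin N)))
      (Fin.cons a b) t := by
    rw [hasDerivAt_pi]
    intro i
    refine Fin.cases ?_ ?_ i
    · simpa using hf
    · intro j; simpa using hg j
  exact ((PiLp.continuousLinearEquiv 2 ℝ
      (fun _ : Fin (k + 1) => EuclideanSpace ℝ (Fin N))).symm.toContinuousLinearMap.hasFDerivAt.comp_hasDerivAt t h1)

lemma norm_pk_le (a : EuclideanSpace ℝ (Fin N)) (b : Fin k → EuclideanSpace ℝ (Fin N)) {R : ℝ}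
    (hR : 0 ≤ R) (hb : ∀ i, ‖b i‖ ≤ R) :
    ‖pk a b‖ ≤ ‖a‖ + Real.sqrt k * R := by
  rw [norm_pk]
  have h1 : ‖a‖ ^ 2 + ∑ i, ‖b i‖ ^ 2 ≤ ‖a‖ ^ 2 + (k : ℝ) * R ^ 2 := by
    have : ∑ i, ‖b i‖ ^ 2 ≤ (k : ℝ) * R ^ 2 := by
      calc ∑ i, ‖b i‖ ^ 2 ≤ ∑ _i : Fin k, R ^ 2 :=
            Finset.sum_le_sum fun i _ => by nlinarith [hb i, norm_nonneg (b i)]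
        _ = (k : ℝ) * R ^ 2 := by simp [Finset.sum_const, mul_comm]
    linarith
  have h2 : Real.sqrt (‖a‖ ^ 2 + (k : ℝ) * R ^ 2) ≤ ‖a‖ + Real.sqrt k * R := by
    rw [show ‖a‖ + Real.sqrt k * R = Real.sqrt ((‖a‖ + Real.sqrt k * R) ^ 2) from
      (Real.sqrt_sq (by positivity)).symm]
    apply Real.sqrt_le_sqrt
    nlinarith [Real.sq_sqrt (Nat.cast_nonneg (α := ℝ) k), Real.sqrt_nonneg (k : ℝ),
      norm_nonneg a, hR, mul_nonneg (mul_nonneg (Real.sqrt_nonneg (k:ℝ)) hR) (norm_nonneg a)]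
  exact le_trans (Real.sqrt_le_sqrt h1) h2

lemma norm_pk_snd_le (a : EuclideanSpace ℝ (Fin N)) (b : Fin k → EuclideanSpace ℝ (Fin N)) :
    ‖pk (0 : EuclideanSpace ℝ (Fin N)) b‖ ≤ ‖pk a b‖ := by
  rw [norm_pk, norm_pk]
  apply Real.sqrt_le_sqrt
  have := sq_nonneg ‖a‖
  simp only [norm_zero]
  nlinarith

lemma gb_le {K ε t T : ℝ} (hK : 0 ≤ K) (hε : 0 ≤ ε) (ht : 0 ≤ t) (htT : t ≤ T) :
    gronwallBound 0 K ε t ≤ ε * T * Real.exp (K * T) := by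
  rcases eq_or_lt_of_le hK with h0 | hKpos
  · simp only [← h0, gronwallBound_K0, zero_mul, Real.exp_zero, mul_one, zero_add]
    nlinarith
  · rw [gronwallBound_of_K_ne_0 (ne_of_gt hKpos)]
    have hm : Real.exp (-(K*t)) * Real.exp (K*t) = 1 := by
      rw [← Real.exp_add]; simp
    have h1 : Real.exp (K*t) - 1 ≤ K*t*Real.exp (K*t) := by
      nlinarith [Real.add_one_le_exp (-(K*t)), Real.exp_pos (K*t)]
    have h2 : ε/K * (Real.exp (K*t) - 1) ≤ ε * t * Real.exp (K*t) := by
      have : ε/K * (Real.exp (K*t) - 1) ≤ ε/K * (K*t*Real.exp (K*t)) := by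
        apply mul_le_mul_of_nonneg_left h1 (by positivity)
      calc ε/K * (Real.exp (K*t) - 1) ≤ ε/K * (K*t*Real.exp (K*t)) := this
        _ = ε * t * Real.exp (K*t) := by field_simp
    have h3 : ε * t * Real.exp (K*t) ≤ ε * T * Real.exp (K*T) := by
      have he : Real.exp (K*t) ≤ Real.exp (K*T) := Real.exp_le_exp.2 (by nlinarith)
      have h4 : ε * t ≤ ε * T := by nlinarith
      nlinarith [Real.exp_pos (K*t), mul_nonneg hε ht]
    nlinarith

end Stmt8Aux

namespace Stmt8Aux

variable {N k : ℕ}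
variable {T l₀ Q₀ Q₂ : ℝ}
variable {Xt : EuclideanSpace ℝ (Fin N) → (Fin k → EuclideanSpace ℝ (Fin N)) → EuclideanSpace ℝ (Fin N)}
variable {Vt : Fin k → EuclideanSpace ℝ (Fin N) → (Fin k → EuclideanSpace ℝ (Fin N)) → ℝ →
      EuclideanSpace ℝ (Fin N)}
variable {x₀ : EuclideanSpace ℝ (Fin N)} {v₀ : Fin k → EuclideanSpace ℝ (Fin N)}

/-- The solution predicate. -/
def Sol (T l₀ : ℝ)
    (Xt : EuclideanSpace ℝ (Fin N) → (Fin k → EuclideanSpace ℝ (Fin N)) → EuclideanSpace ℝ (Fin N))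
    (Vt : Fin k → EuclideanSpace ℝ (Fin N) → (Fin k → EuclideanSpace ℝ (Fin N)) → ℝ →
      EuclideanSpace ℝ (Fin N))
    (x₀ : EuclideanSpace ℝ (Fin N)) (v₀ : Fin k → EuclideanSpace ℝ (Fin N))
    (β γ : ℝ) (x : ℝ → EuclideanSpace ℝ (Fin N)) (v : Fin k → ℝ → EuclideanSpace ℝ (Fin N))
    (l : ℝ → ℝ) : Prop :=
  x 0 = x₀ ∧ (∀ i, v i 0 = v₀ i) ∧ l 0 = l₀ ∧
  (∀ t ∈ Set.Icc (0:ℝ) T, HasDerivAt x (β • Xt (x t) (fun i => v i t)) t) ∧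
  (∀ i, ∀ t ∈ Set.Icc (0:ℝ) T,
    HasDerivAt (v i) (γ • Vt i (x t) (fun j => v j t) (l t)) t) ∧
  (∀ t ∈ Set.Icc (0:ℝ) T, HasDerivAt l (-(l t)) t)

lemma l_eq {T l₀ : ℝ} {l : ℝ → ℝ} (hl0 : l 0 = l₀)
    (hl : ∀ t ∈ Set.Icc (0:ℝ) T, HasDerivAt l (-(l t)) t) :
    ∀ t ∈ Set.Icc (0:ℝ) T, l t = l₀ * Real.exp (-t) := by
  have key : ∀ t ∈ Set.Icc (0:ℝ) T, l t * Real.exp t = l₀ := by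
    have hc : ContinuousOn (fun t => l t * Real.exp t) (Set.Icc 0 T) := fun t ht =>
      (((hl t ht).continuousAt).mul Real.continuous_exp.continuousAt).continuousWithinAt
    have hd : ∀ t ∈ Set.Ico (0:ℝ) T, HasDerivWithinAt (fun t => l t * Real.exp t) 0 (Set.Ici t) t := by
      intro t ht
      have h := (hl t (Set.Ico_subset_Icc_self ht)).mul (Real.hasDerivAt_exp t)
      have h2 : -l t * Real.exp t + l t * Real.exp t = 0 := by ring
      rw [h2] at h
      exact h.hasDerivWithinAt
    intro t ht
    have := constant_of_has_deriv_right_zero hc hd t ht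
    simpa [hl0] using this
  intro t ht
  have h := key t ht
  have hexp : Real.exp t ≠ 0 := (Real.exp_pos t).ne'
  field_simp [Real.exp_neg]
  rw [Real.exp_neg, ← h]
  field_simp

lemma getM {β γ : ℝ} {x : ℝ → EuclideanSpace ℝ (Fin N)} {v : Fin k → ℝ → EuclideanSpace ℝ (Fin N)}
    {l : ℝ → ℝ} (sol : Sol T l₀ Xt Vt x₀ v₀ β γ x v l) :
    ∃ M, ∀ t ∈ Set.Icc (0:ℝ) T, ‖pk (x t - x₀) (fun i => v i t - v₀ i)‖ ≤ M := by
  obtain ⟨hx0, hv0, hl0, hdx, hdv, hdl⟩ := sol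
  have hc : ContinuousOn (fun t => pk (x t - x₀) (fun i => v i t - v₀ i)) (Set.Icc 0 T) := by
    intro t ht
    exact ((hasDerivAt_pk ((hdx t ht).sub_const x₀)
      (fun i => (hdv i t ht).sub_const (v₀ i))).continuousAt).continuousWithinAt
  exact isCompact_Icc.exists_bound_of_continuousOn hc

lemma key (hT : 0 < T) (hl₀ : 0 < l₀) (hQ₀ : 0 ≤ Q₀) (hQ₂ : 0 ≤ Q₂)
    (hX : ∀ x x' v v', ‖Xt x v - Xt x' v'‖
      ≤ Q₀ * Real.sqrt (‖x - x'‖ ^ 2 + ∑ i, ‖v i - v' i‖ ^ 2))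
    (hV : ∀ i x x' v v' l, 0 < l → l ≤ l₀ →
      ‖Vt i x v l - Vt i x' v' l‖
        ≤ Q₂ * (Real.sqrt (‖x - x'‖ ^ 2 + ∑ j, ‖v j - v' j‖ ^ 2) + l₀ ^ 2))
    {β₁ γ₁ β₂ γ₂ : ℝ} {x₁ x₂ : ℝ → EuclideanSpace ℝ (Fin N)}
    {v₁ v₂ : Fin k → ℝ → EuclideanSpace ℝ (Fin N)} {l₁ l₂ : ℝ → ℝ}
    (hβ₁ : 0 ≤ β₁) (hγ₁ : 0 ≤ γ₁)
    (s₁ : Sol T l₀ Xt Vt x₀ v₀ β₁ γ₁ x₁ v₁ l₁) (s₂ : Sol T l₀ Xt Vt x₀ v₀ β₂ γ₂ x₂ v₂ l₂)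
    {σ : ℝ} (hσ0 : 0 ≤ σ) (hσγ : σ * γ₂ = γ₁)
    {M : ℝ} (hM : ∀ t ∈ Set.Icc (0:ℝ) T, ‖pk (x₂ t - x₀) (fun i => v₂ i t - v₀ i)‖ ≤ M)
    {B G SB : ℝ} (hB : β₁ ≤ B) (hG : γ₁ ≤ G) (hSB : σ ≤ SB) :
    ∀ t ∈ Set.Icc (0:ℝ) T, Real.sqrt (‖x₁ t‖ ^ 2 + ∑ i, ‖v₁ i t‖ ^ 2) ≤
      Real.sqrt (‖x₀‖ ^ 2 + ∑ i, ‖v₀ i‖ ^ 2) +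
      ((B * (‖Xt x₀ v₀‖ + Q₀ * (SB * M)) + Real.sqrt k * G * Q₂ * ((1 + SB) * M + l₀ ^ 2)) * T *
        Real.exp ((B * Q₀ + Real.sqrt k * G * Q₂) * T) + SB * M) := by
  obtain ⟨hx10, hv10, hl10, hdx1, hdv1, hdl1⟩ := s₁
  obtain ⟨hx20, hv20, hl20, hdx2, hdv2, hdl2⟩ := s₂
  have hM0 : 0 ≤ M := le_trans (norm_nonneg _) (hM 0 ⟨le_refl 0, hT.le⟩)
  have hskn : 0 ≤ Real.sqrt k := Real.sqrt_nonneg _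
  have hB0 : 0 ≤ B := hβ₁.trans hB
  have hG0 : 0 ≤ G := hγ₁.trans hG
  have hSB0 : 0 ≤ SB := hσ0.trans hSB
  have hC₀ : 0 ≤ ‖Xt x₀ v₀‖ := norm_nonneg _
  have hle1 : ∀ t ∈ Set.Icc (0:ℝ) T, l₁ t = l₀ * Real.exp (-t) := l_eq hl10 hdl1
  have hle2 : ∀ t ∈ Set.Icc (0:ℝ) T, l₂ t = l₀ * Real.exp (-t) := l_eq hl20 hdl2
  have hlpos : ∀ t ∈ Set.Icc (0:ℝ) T, 0 < l₁ t := by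
    intro t ht; rw [hle1 t ht]; positivity
  have hlle : ∀ t ∈ Set.Icc (0:ℝ) T, l₁ t ≤ l₀ := by
    intro t ht
    rw [hle1 t ht]
    calc l₀ * Real.exp (-t) ≤ l₀ * 1 := by
          apply mul_le_mul_of_nonneg_left _ hl₀.le
          rw [show (1:ℝ) = Real.exp 0 from Real.exp_zero.symm]
          exact Real.exp_le_exp.2 (by linarith [ht.1])
      _ = l₀ := mul_one l₀
  set e : ℝ → PiLp 2 (fun _ : Fin (k + 1) => EuclideanSpace ℝ (Fin N)) :=
    fun t => pk (x₁ t - x₀) (fun i => (v₁ i t - v₀ i) - σ • (v₂ i t - v₀ i)) with he_def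
  set e' : ℝ → PiLp 2 (fun _ : Fin (k + 1) => EuclideanSpace ℝ (Fin N)) :=
    fun t => pk (β₁ • Xt (x₁ t) (fun i => v₁ i t))
      (fun i => γ₁ • Vt i (x₁ t) (fun j => v₁ j t) (l₁ t)
        - γ₁ • Vt i (x₂ t) (fun j => v₂ j t) (l₁ t)) with he'_def
  have hder : ∀ t ∈ Set.Icc (0:ℝ) T, HasDerivAt e (e' t) t := by
    intro t ht
    apply hasDerivAt_pk
    · exact (hdx1 t ht).sub_const x₀
    · intro i
      have h1 : HasDerivAt (fun s => v₁ i s - v₀ i)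
          (γ₁ • Vt i (x₁ t) (fun j => v₁ j t) (l₁ t)) t := (hdv1 i t ht).sub_const _
      have h2 : HasDerivAt (fun s => σ • (v₂ i s - v₀ i))
          (γ₁ • Vt i (x₂ t) (fun j => v₂ j t) (l₁ t)) t := by
        have h3 := ((hdv2 i t ht).sub_const (v₀ i)).const_smul σ
        rw [smul_smul, hσγ] at h3
        rwa [hle2 t ht, ← hle1 t ht] at h3
      exact h1.sub h2
  have he0 : ‖e 0‖ ≤ 0 := by
    have h0T : (0:ℝ) ∈ Set.Icc (0:ℝ) T := ⟨le_refl 0, hT.le⟩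
    have : e 0 = pk 0 (fun _ => 0) := by
      simp only [he_def]
      have hfun : (fun i => v₁ i 0 - v₀ i - σ • (v₂ i 0 - v₀ i))
          = (fun _ : Fin k => (0 : EuclideanSpace ℝ (Fin N))) := by
        funext i; rw [hv10 i, hv20 i, sub_self, smul_zero, sub_zero]
      rw [hx10, sub_self, hfun]
    rw [this, pk_zero, norm_zero]
  -- displacement bounds
  have hd1 : ∀ t ∈ Set.Icc (0:ℝ) T,
      ‖pk (x₁ t - x₀) (fun i => v₁ i t - v₀ i)‖ ≤ ‖e t‖ + σ * M := by
    intro t ht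
    have hdecomp : pk (x₁ t - x₀) (fun i => v₁ i t - v₀ i)
        = e t + σ • pk 0 (fun i => v₂ i t - v₀ i) := by
      simp only [he_def]
      rw [pk_smul, pk_add, smul_zero, add_zero]
      have hfun : (fun i => v₁ i t - v₀ i - σ • (v₂ i t - v₀ i) + σ • (v₂ i t - v₀ i))
          = fun i => v₁ i t - v₀ i := by funext i; abel
      rw [hfun]
    calc ‖pk (x₁ t - x₀) (fun i => v₁ i t - v₀ i)‖
        = ‖e t + σ • pk 0 (fun i => v₂ i t - v₀ i)‖ := by rw [hdecomp]
      _ ≤ ‖e t‖ + ‖σ • pk 0 (fun i => v₂ i t - v₀ i)‖ := norm_add_le _ _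
      _ ≤ ‖e t‖ + σ * M := by
          have h1 : ‖σ • pk (0 : EuclideanSpace ℝ (Fin N)) (fun i => v₂ i t - v₀ i)‖
              = σ * ‖pk (0 : EuclideanSpace ℝ (Fin N)) (fun i => v₂ i t - v₀ i)‖ := by
            rw [norm_smul, Real.norm_eq_abs, abs_of_nonneg hσ0]
          have h2 : ‖pk (0 : EuclideanSpace ℝ (Fin N)) (fun i => v₂ i t - v₀ i)‖ ≤ M :=
            le_trans (norm_pk_snd_le (x₂ t - x₀) _) (hM t ht)
          rw [h1]
          have := mul_le_mul_of_nonneg_left h2 hσ0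
          linarith
  have hd2 : ∀ t ∈ Set.Icc (0:ℝ) T,
      ‖pk (x₁ t - x₂ t) (fun i => v₁ i t - v₂ i t)‖ ≤ ‖e t‖ + σ * M + M := by
    intro t ht
    have hsplit : pk (x₁ t - x₂ t) (fun i => v₁ i t - v₂ i t)
        = pk (x₁ t - x₀) (fun i => v₁ i t - v₀ i)
          - pk (x₂ t - x₀) (fun i => v₂ i t - v₀ i) := by
      rw [pk_sub]
      have h1 : x₁ t - x₀ - (x₂ t - x₀) = x₁ t - x₂ t := by abel
      have h2 : (fun i => v₁ i t - v₀ i - (v₂ i t - v₀ i)) = fun i => v₁ i t - v₂ i t := by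
        funext i; abel
      rw [h1, h2]
    rw [hsplit]
    calc ‖_ - _‖ ≤ ‖pk (x₁ t - x₀) (fun i => v₁ i t - v₀ i)‖
          + ‖pk (x₂ t - x₀) (fun i => v₂ i t - v₀ i)‖ := norm_sub_le _ _
      _ ≤ (‖e t‖ + σ * M) + M := add_le_add (hd1 t ht) (hM t ht)
  have hbound : ∀ t ∈ Set.Ico (0:ℝ) T, ‖e' t‖ ≤
      (β₁ * Q₀ + Real.sqrt k * γ₁ * Q₂) * ‖e t‖
      + (β₁ * (‖Xt x₀ v₀‖ + Q₀ * (σ * M))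
        + Real.sqrt k * γ₁ * Q₂ * ((1 + σ) * M + l₀ ^ 2)) := by
    intro t ht'
    have ht : t ∈ Set.Icc (0:ℝ) T := Set.Ico_subset_Icc_self ht'
    have hxb : ‖β₁ • Xt (x₁ t) (fun i => v₁ i t)‖
        ≤ β₁ * (‖Xt x₀ v₀‖ + Q₀ * (‖e t‖ + σ * M)) := by
      rw [norm_smul, Real.norm_eq_abs, abs_of_nonneg hβ₁]
      apply mul_le_mul_of_nonneg_left _ hβ₁
      have htri : ‖Xt (x₁ t) (fun i => v₁ i t)‖
          ≤ ‖Xt (x₁ t) (fun i => v₁ i t) - Xt x₀ v₀‖ + ‖Xt x₀ v₀‖ := by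
        calc ‖Xt (x₁ t) (fun i => v₁ i t)‖
            = ‖(Xt (x₁ t) (fun i => v₁ i t) - Xt x₀ v₀) + Xt x₀ v₀‖ := by rw [sub_add_cancel]
          _ ≤ _ := norm_add_le _ _
      have hXl := hX (x₁ t) x₀ (fun i => v₁ i t) v₀
      rw [← norm_pk] at hXl
      have h5 := mul_le_mul_of_nonneg_left (hd1 t ht) hQ₀
      linarith
    have hvb : ∀ i, ‖γ₁ • Vt i (x₁ t) (fun j => v₁ j t) (l₁ t)
        - γ₁ • Vt i (x₂ t) (fun j => v₂ j t) (l₁ t)‖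
        ≤ γ₁ * Q₂ * ((‖e t‖ + σ * M + M) + l₀ ^ 2) := by
      intro i
      rw [← smul_sub, norm_smul, Real.norm_eq_abs, abs_of_nonneg hγ₁, mul_assoc]
      apply mul_le_mul_of_nonneg_left _ hγ₁
      have hVl := hV i (x₁ t) (x₂ t) (fun j => v₁ j t) (fun j => v₂ j t) (l₁ t)
        (hlpos t ht) (hlle t ht)
      rw [← norm_pk] at hVl
      have h6 := mul_le_mul_of_nonneg_left (hd2 t ht) hQ₂
      nlinarith [hd2 t ht]
    have hR0 : 0 ≤ γ₁ * Q₂ * ((‖e t‖ + σ * M + M) + l₀ ^ 2) := by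
      apply mul_nonneg (mul_nonneg hγ₁ hQ₂)
      have := norm_nonneg (e t)
      have := mul_nonneg hσ0 hM0
      positivity
    calc ‖e' t‖ ≤ ‖β₁ • Xt (x₁ t) (fun i => v₁ i t)‖
          + Real.sqrt k * (γ₁ * Q₂ * ((‖e t‖ + σ * M + M) + l₀ ^ 2)) := by
          simp only [he'_def]
          exact norm_pk_le _ _ hR0 hvb
      _ ≤ β₁ * (‖Xt x₀ v₀‖ + Q₀ * (‖e t‖ + σ * M))
          + Real.sqrt k * (γ₁ * Q₂ * ((‖e t‖ + σ * M + M) + l₀ ^ 2)) := by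
          exact add_le_add hxb le_rfl
      _ = (β₁ * Q₀ + Real.sqrt k * γ₁ * Q₂) * ‖e t‖
          + (β₁ * (‖Xt x₀ v₀‖ + Q₀ * (σ * M))
            + Real.sqrt k * γ₁ * Q₂ * ((1 + σ) * M + l₀ ^ 2)) := by ring
  have hcont : ContinuousOn e (Set.Icc 0 T) := fun t ht =>
    (hder t ht).continuousAt.continuousWithinAt
  have hGron := norm_le_gronwallBound_of_norm_deriv_right_le hcont
    (fun t ht => (hder t (Set.Ico_subset_Icc_self ht)).hasDerivWithinAt) he0 hbound
  have hKnn : 0 ≤ β₁ * Q₀ + Real.sqrt k * γ₁ * Q₂ :=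
    add_nonneg (mul_nonneg hβ₁ hQ₀) (mul_nonneg (mul_nonneg hskn hγ₁) hQ₂)
  have hεnn : 0 ≤ β₁ * (‖Xt x₀ v₀‖ + Q₀ * (σ * M))
      + Real.sqrt k * γ₁ * Q₂ * ((1 + σ) * M + l₀ ^ 2) := by
    apply add_nonneg
    · exact mul_nonneg hβ₁ (add_nonneg hC₀ (mul_nonneg hQ₀ (mul_nonneg hσ0 hM0)))
    · apply mul_nonneg (mul_nonneg (mul_nonneg hskn hγ₁) hQ₂)
      have : 0 ≤ (1 + σ) * M := mul_nonneg (by linarith) hM0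
      positivity
  intro t ht
  have hE : ‖e t‖ ≤ (β₁ * (‖Xt x₀ v₀‖ + Q₀ * (σ * M))
      + Real.sqrt k * γ₁ * Q₂ * ((1 + σ) * M + l₀ ^ 2)) * T
      * Real.exp ((β₁ * Q₀ + Real.sqrt k * γ₁ * Q₂) * T) := by
    have h := hGron t ht
    rw [sub_zero] at h
    exact h.trans (gb_le hKnn hεnn ht.1 ht.2)
  -- monotonicity in parameters
  have hεmono : β₁ * (‖Xt x₀ v₀‖ + Q₀ * (σ * M))
      + Real.sqrt k * γ₁ * Q₂ * ((1 + σ) * M + l₀ ^ 2)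
      ≤ B * (‖Xt x₀ v₀‖ + Q₀ * (SB * M)) + Real.sqrt k * G * Q₂ * ((1 + SB) * M + l₀ ^ 2) := by
    have h1 : β₁ * (‖Xt x₀ v₀‖ + Q₀ * (σ * M)) ≤ B * (‖Xt x₀ v₀‖ + Q₀ * (SB * M)) := by
      apply mul_le_mul hB _ _ hB0
      · have := mul_le_mul_of_nonneg_right hSB hM0
        have := mul_le_mul_of_nonneg_left (mul_le_mul_of_nonneg_right hSB hM0) hQ₀
        linarith
      · exact add_nonneg hC₀ (mul_nonneg hQ₀ (mul_nonneg hσ0 hM0))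
    have h2 : Real.sqrt k * γ₁ * Q₂ * ((1 + σ) * M + l₀ ^ 2)
        ≤ Real.sqrt k * G * Q₂ * ((1 + SB) * M + l₀ ^ 2) := by
      apply mul_le_mul
      · apply mul_le_mul_of_nonneg_right _ hQ₂
        exact mul_le_mul_of_nonneg_left hG hskn
      · have := mul_le_mul_of_nonneg_right (add_le_add_left hSB 1) hM0
        linarith
      · have : 0 ≤ (1 + σ) * M := mul_nonneg (by linarith) hM0
        positivity
      · exact mul_nonneg (mul_nonneg hskn hG0) hQ₂
    linarith
  have hKmono : (β₁ * Q₀ + Real.sqrt k * γ₁ * Q₂) * T ≤ (B * Q₀ + Real.sqrt k * G * Q₂) * T := by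
    apply mul_le_mul_of_nonneg_right _ hT.le
    have h1 : β₁ * Q₀ ≤ B * Q₀ := mul_le_mul_of_nonneg_right hB hQ₀
    have h2 : Real.sqrt k * γ₁ * Q₂ ≤ Real.sqrt k * G * Q₂ :=
      mul_le_mul_of_nonneg_right (mul_le_mul_of_nonneg_left hG hskn) hQ₂
    linarith
  have hEfin : ‖e t‖ ≤ (B * (‖Xt x₀ v₀‖ + Q₀ * (SB * M))
      + Real.sqrt k * G * Q₂ * ((1 + SB) * M + l₀ ^ 2)) * T
      * Real.exp ((B * Q₀ + Real.sqrt k * G * Q₂) * T) := by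
    refine hE.trans ?_
    have hexp : Real.exp ((β₁ * Q₀ + Real.sqrt k * γ₁ * Q₂) * T)
        ≤ Real.exp ((B * Q₀ + Real.sqrt k * G * Q₂) * T) := Real.exp_le_exp.2 hKmono
    calc _ ≤ (B * (‖Xt x₀ v₀‖ + Q₀ * (SB * M))
          + Real.sqrt k * G * Q₂ * ((1 + SB) * M + l₀ ^ 2)) * T
          * Real.exp ((β₁ * Q₀ + Real.sqrt k * γ₁ * Q₂) * T) := by
          apply mul_le_mul_of_nonneg_right (mul_le_mul_of_nonneg_right hεmono hT.le)
            (Real.exp_pos _).le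
      _ ≤ _ := by
          apply mul_le_mul_of_nonneg_left hexp
          apply mul_nonneg (hεnn.trans hεmono) hT.le
  -- final chain
  have hfin1 : Real.sqrt (‖x₁ t‖ ^ 2 + ∑ i, ‖v₁ i t‖ ^ 2) = ‖pk (x₁ t) (fun i => v₁ i t)‖ :=
    (norm_pk _ _).symm
  have hfin2 : pk (x₁ t) (fun i => v₁ i t)
      = pk x₀ v₀ + pk (x₁ t - x₀) (fun i => v₁ i t - v₀ i) := by
    rw [pk_add]
    have h1 : x₀ + (x₁ t - x₀) = x₁ t := by abel
    have h2 : (fun i => v₀ i + (v₁ i t - v₀ i)) = fun i => v₁ i t := by funext i; abel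
    rw [h1, h2]
  have hσM : σ * M ≤ SB * M := mul_le_mul_of_nonneg_right hSB hM0
  calc Real.sqrt (‖x₁ t‖ ^ 2 + ∑ i, ‖v₁ i t‖ ^ 2)
      = ‖pk (x₁ t) (fun i => v₁ i t)‖ := hfin1
    _ ≤ ‖pk x₀ v₀‖ + ‖pk (x₁ t - x₀) (fun i => v₁ i t - v₀ i)‖ := by
        rw [hfin2]; exact norm_add_le _ _
    _ ≤ ‖pk x₀ v₀‖ + (‖e t‖ + σ * M) := by linarith [hd1 t ht]
    _ ≤ _ := by
        rw [norm_pk]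
        linarith [hEfin]

end Stmt8Aux

namespace Stmt8Aux


lemma kb_nonneg {c q0 q2 l0 t b g sb m sk : ℝ} (hc : 0 ≤ c) (h0 : 0 ≤ q0) (h2 : 0 ≤ q2)
    (ht : 0 ≤ t) (hb : 0 ≤ b) (hg : 0 ≤ g) (hsb : 0 ≤ sb) (hm : 0 ≤ m) (hsk : 0 ≤ sk) :
    0 ≤ (b * (c + q0 * (sb * m)) + sk * g * q2 * ((1 + sb) * m + l0 ^ 2)) * t *
      Real.exp ((b * q0 + sk * g * q2) * t) + sb * m := by
  have h3 : 0 ≤ b * (c + q0 * (sb * m)) :=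
    mul_nonneg hb (add_nonneg hc (mul_nonneg h0 (mul_nonneg hsb hm)))
  have h4 : 0 ≤ sk * g * q2 * ((1 + sb) * m + l0 ^ 2) :=
    mul_nonneg (mul_nonneg (mul_nonneg hsk hg) h2)
      (add_nonneg (mul_nonneg (by linarith) hm) (sq_nonneg l0))
  have h5 := (Real.exp_pos ((b * q0 + sk * g * q2) * t)).le
  have h6 : 0 ≤ (b * (c + q0 * (sb * m)) + sk * g * q2 * ((1 + sb) * m + l0 ^ 2)) * t :=
    mul_nonneg (by linarith) ht
  nlinarith [mul_nonneg h6 h5, mul_nonneg hsb hm]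

lemma chain0 {c q0 T δ ε₀ X : ℝ} (hc : 0 ≤ c) (h0 : 0 ≤ q0) (hT : 0 ≤ T) (hδ0 : 0 ≤ δ)
    (hδ1 : δ ≤ 1) (hX : c * T * Real.exp (q0 * T) ≤ X) (hδε : δ * (X + 1) ≤ ε₀) :
    δ * c * T * Real.exp (δ * q0 * T) ≤ ε₀ := by
  have hexp : Real.exp (δ * q0 * T) ≤ Real.exp (q0 * T) := by
    apply Real.exp_le_exp.2
    have h' : δ * (q0 * T) ≤ 1 * (q0 * T) := mul_le_mul_of_nonneg_right hδ1 (mul_nonneg h0 hT)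
    linarith
  have h1 : δ * c * T * Real.exp (δ * q0 * T) ≤ δ * c * T * Real.exp (q0 * T) := by
    apply mul_le_mul_of_nonneg_left hexp
    exact mul_nonneg (mul_nonneg hδ0 hc) hT
  have h2 : δ * c * T * Real.exp (q0 * T) = δ * (c * T * Real.exp (q0 * T)) := by ring
  have h3 : δ * (c * T * Real.exp (q0 * T)) ≤ δ * (X + 1) :=
    mul_le_mul_of_nonneg_left (by linarith) hδ0
  linarith

lemma chain1 {c q0 q2 l0 T sk M γs δ ε₀ : ℝ}
    (hc : 0 ≤ c) (h0 : 0 ≤ q0) (h2 : 0 ≤ q2) (hT : 0 ≤ T) (hsk : 0 ≤ sk) (hM : 0 ≤ M)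
    (hγs : 0 < γs) (hδ0 : 0 ≤ δ) (hδ1 : δ ≤ 1) (hδγs : δ ≤ γs)
    (hδε : δ * (((c + q0 * M + sk * q2 * (2 * M + l0 ^ 2)) * T *
      Real.exp ((q0 + sk * q2) * T) + M / γs) + 1) ≤ ε₀) :
    (δ * (c + q0 * (δ / γs * M)) + sk * δ * q2 * ((1 + δ / γs) * M + l0 ^ 2)) * T *
      Real.exp ((δ * q0 + sk * δ * q2) * T) + δ / γs * M ≤ ε₀ := by
  have hsb0 : 0 ≤ δ / γs := div_nonneg hδ0 hγs.le
  have hsb1 : δ / γs ≤ 1 := (div_le_one hγs).2 hδγs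
  have hexp : Real.exp ((δ * q0 + sk * δ * q2) * T) ≤ Real.exp ((q0 + sk * q2) * T) := by
    apply Real.exp_le_exp.2
    apply mul_le_mul_of_nonneg_right _ hT
    have e1 : δ * q0 ≤ q0 := by nlinarith
    have e2 : sk * δ * q2 ≤ sk * q2 := by nlinarith [mul_nonneg hsk h2]
    linarith
  have hF1 : 0 ≤ δ * (c + q0 * (δ / γs * M)) + sk * δ * q2 * ((1 + δ / γs) * M + l0 ^ 2) := by
    have := mul_nonneg hδ0 (add_nonneg hc (mul_nonneg h0 (mul_nonneg hsb0 hM)))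
    have := mul_nonneg (mul_nonneg (mul_nonneg hsk hδ0) h2)
      (add_nonneg (mul_nonneg (by linarith : (0:ℝ) ≤ 1 + δ / γs) hM) (sq_nonneg l0))
    linarith
  have hstep1 : δ * (c + q0 * (δ / γs * M)) ≤ δ * (c + q0 * M) := by
    have h' : δ / γs * M ≤ 1 * M := mul_le_mul_of_nonneg_right hsb1 hM
    have h'' : q0 * (δ / γs * M) ≤ q0 * M := mul_le_mul_of_nonneg_left (by linarith) h0
    exact mul_le_mul_of_nonneg_left (by linarith) hδ0
  have hstep2 : sk * δ * q2 * ((1 + δ / γs) * M + l0 ^ 2)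
      ≤ δ * (sk * q2 * (2 * M + l0 ^ 2)) := by
    have hmono : (1 + δ / γs) * M + l0 ^ 2 ≤ 2 * M + l0 ^ 2 := by nlinarith
    have h3 : 0 ≤ sk * δ * q2 := mul_nonneg (mul_nonneg hsk hδ0) h2
    calc sk * δ * q2 * ((1 + δ / γs) * M + l0 ^ 2)
        ≤ sk * δ * q2 * (2 * M + l0 ^ 2) := mul_le_mul_of_nonneg_left hmono h3
      _ = δ * (sk * q2 * (2 * M + l0 ^ 2)) := by ring
  have hF2 : 0 ≤ δ * (c + q0 * M) + δ * (sk * q2 * (2 * M + l0 ^ 2)) := by linarith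
  have hmain : (δ * (c + q0 * (δ / γs * M)) + sk * δ * q2 * ((1 + δ / γs) * M + l0 ^ 2)) * T *
      Real.exp ((δ * q0 + sk * δ * q2) * T)
      ≤ (δ * (c + q0 * M) + δ * (sk * q2 * (2 * M + l0 ^ 2))) * T *
        Real.exp ((q0 + sk * q2) * T) := by
    calc (δ * (c + q0 * (δ / γs * M)) + sk * δ * q2 * ((1 + δ / γs) * M + l0 ^ 2)) * T *
        Real.exp ((δ * q0 + sk * δ * q2) * T)
        ≤ (δ * (c + q0 * M) + δ * (sk * q2 * (2 * M + l0 ^ 2))) * T *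
          Real.exp ((δ * q0 + sk * δ * q2) * T) := by
          apply mul_le_mul_of_nonneg_right _ (Real.exp_pos _).le
          apply mul_le_mul_of_nonneg_right _ hT
          linarith
      _ ≤ _ := mul_le_mul_of_nonneg_left hexp (mul_nonneg hF2 hT)
  have heq : (δ * (c + q0 * M) + δ * (sk * q2 * (2 * M + l0 ^ 2))) * T *
      Real.exp ((q0 + sk * q2) * T) + δ / γs * M
      = δ * ((c + q0 * M + sk * q2 * (2 * M + l0 ^ 2)) * T *
        Real.exp ((q0 + sk * q2) * T) + M / γs) := by
    field_simp
  have hlast : δ * ((c + q0 * M + sk * q2 * (2 * M + l0 ^ 2)) * T *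
      Real.exp ((q0 + sk * q2) * T) + M / γs)
      ≤ δ * (((c + q0 * M + sk * q2 * (2 * M + l0 ^ 2)) * T *
        Real.exp ((q0 + sk * q2) * T) + M / γs) + 1) :=
    mul_le_mul_of_nonneg_left (by linarith) hδ0
  linarith


end Stmt8Aux

namespace Stmt8Aux

variable {N k : ℕ}
variable {T l₀ Q₀ Q₂ : ℝ}
variable {Xt : EuclideanSpace ℝ (Fin N) → (Fin k → EuclideanSpace ℝ (Fin N)) → EuclideanSpace ℝ (Fin N)}
variable {Vt : Fin k → EuclideanSpace ℝ (Fin N) → (Fin k → EuclideanSpace ℝ (Fin N)) → ℝ →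
      EuclideanSpace ℝ (Fin N)}
variable {x₀ : EuclideanSpace ℝ (Fin N)} {v₀ : Fin k → EuclideanSpace ℝ (Fin N)}

lemma const_of_sol00 (hT : 0 < T) {x : ℝ → EuclideanSpace ℝ (Fin N)}
    {v : Fin k → ℝ → EuclideanSpace ℝ (Fin N)} {l : ℝ → ℝ}
    (sol : Sol T l₀ Xt Vt x₀ v₀ 0 0 x v l) :
    ∀ t ∈ Set.Icc (0:ℝ) T, Real.sqrt (‖x t‖ ^ 2 + ∑ i, ‖v i t‖ ^ 2)
      = Real.sqrt (‖x₀‖ ^ 2 + ∑ i, ‖v₀ i‖ ^ 2) := by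
  obtain ⟨hx0, hv0, hl0, hdx, hdv, hdl⟩ := sol
  have hxc : ∀ t ∈ Set.Icc (0:ℝ) T, x t = x 0 := by
    apply constant_of_has_deriv_right_zero
    · exact fun t ht => (hdx t ht).continuousAt.continuousWithinAt
    · intro t ht
      have h := hdx t (Set.Ico_subset_Icc_self ht)
      rw [zero_smul] at h
      exact h.hasDerivWithinAt
  have hvc : ∀ i, ∀ t ∈ Set.Icc (0:ℝ) T, v i t = v i 0 := by
    intro i
    apply constant_of_has_deriv_right_zero
    · exact fun t ht => (hdv i t ht).continuousAt.continuousWithinAt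
    · intro t ht
      have h := hdv i t (Set.Ico_subset_Icc_self ht)
      rw [zero_smul] at h
      exact h.hasDerivWithinAt
  intro t ht
  have hsum : ∑ i, ‖v i t‖ ^ 2 = ∑ i, ‖v₀ i‖ ^ 2 :=
    Finset.sum_congr rfl fun i _ => by rw [hvc i t ht, hv0 i]
  rw [hxc t ht, hx0, hsum]

end Stmt8Aux

/-- Boundedness of solutions of the modified shrinking-dimer saddle dynamics
`dx/dt = β X̃(x,v)`, `dv_i/dt = γ Ṽ_i(x,v,l)`, `dl/dt = -l` with globally Lipschitz
right-hand sides: there is a function `S(β,γ)`, increasing in both arguments, with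
`S(0,0) = (‖x₀‖² + ∑‖v_{i,0}‖²)^{1/2}`, bounding `(‖x(t)‖² + ∑‖v_i(t)‖²)^{1/2}` on `[0,T]`;
in particular `S(β,γ)` is within `ε₀` of its minimum for `β, γ` small enough. -/
theorem stmt8 {N k : ℕ} (T l₀ Q₀ Q₂ r₀ : ℝ) (hT : 0 < T) (hl₀ : 0 < l₀)
    (hQ₀ : 0 ≤ Q₀) (hQ₂ : 0 ≤ Q₂)
    (Xt : EuclideanSpace ℝ (Fin N) → (Fin k → EuclideanSpace ℝ (Fin N)) → EuclideanSpace ℝ (Fin N))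
    (Vt : Fin k → EuclideanSpace ℝ (Fin N) → (Fin k → EuclideanSpace ℝ (Fin N)) → ℝ →
      EuclideanSpace ℝ (Fin N))
    (hX : ∀ x x' v v', ‖Xt x v - Xt x' v'‖
      ≤ Q₀ * Real.sqrt (‖x - x'‖ ^ 2 + ∑ i, ‖v i - v' i‖ ^ 2))
    (hV : ∀ i x x' v v' l, 0 < l → l ≤ l₀ →
      ‖Vt i x v l - Vt i x' v' l‖
        ≤ Q₂ * (Real.sqrt (‖x - x'‖ ^ 2 + ∑ j, ‖v j - v' j‖ ^ 2) + l₀ ^ 2))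
    (x₀ : EuclideanSpace ℝ (Fin N)) (v₀ : Fin k → EuclideanSpace ℝ (Fin N))
    (hinit : ‖x₀‖ ^ 2 + ∑ i, ‖v₀ i‖ ^ 2 ≤ r₀ ^ 2) :
    ∃ S : ℝ → ℝ → ℝ,
      (∀ β β' γ γ', 0 ≤ β → β ≤ β' → 0 ≤ γ → γ ≤ γ' → S β γ ≤ S β' γ') ∧
      S 0 0 = Real.sqrt (‖x₀‖ ^ 2 + ∑ i, ‖v₀ i‖ ^ 2) ∧
      (∀ ε₀, 0 < ε₀ → ∃ δ, 0 < δ ∧ ∀ β γ, 0 ≤ β → β ≤ δ → 0 ≤ γ → γ ≤ δ →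
        S β γ ≤ Real.sqrt (‖x₀‖ ^ 2 + ∑ i, ‖v₀ i‖ ^ 2) + ε₀) ∧
      (∀ (β γ : ℝ) (x : ℝ → EuclideanSpace ℝ (Fin N))
          (v : Fin k → ℝ → EuclideanSpace ℝ (Fin N)) (l : ℝ → ℝ),
        0 ≤ β → 0 ≤ γ →
        x 0 = x₀ → (∀ i, v i 0 = v₀ i) → l 0 = l₀ →
        (∀ t ∈ Set.Icc (0:ℝ) T, HasDerivAt x (β • Xt (x t) (fun i => v i t)) t) →
        (∀ i, ∀ t ∈ Set.Icc (0:ℝ) T,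
          HasDerivAt (v i) (γ • Vt i (x t) (fun j => v j t) (l t)) t) →
        (∀ t ∈ Set.Icc (0:ℝ) T, HasDerivAt l (-(l t)) t) →
        ∀ t ∈ Set.Icc (0:ℝ) T, Real.sqrt (‖x t‖ ^ 2 + ∑ i, ‖v i t‖ ^ 2) ≤ S β γ) := by
  classical
  set n0 := Real.sqrt (‖x₀‖ ^ 2 + ∑ i, ‖v₀ i‖ ^ 2) with hn0def
  set sset : ℝ → ℝ → Set ℝ := fun β γ =>
    insert n0 {r | ∃ β' γ' x v l, 0 ≤ β' ∧ β' ≤ β ∧ 0 ≤ γ' ∧ γ' ≤ γ ∧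
      Stmt8Aux.Sol T l₀ Xt Vt x₀ v₀ β' γ' x v l ∧
      ∃ t ∈ Set.Icc (0:ℝ) T, r = Real.sqrt (‖x t‖ ^ 2 + ∑ i, ‖v i t‖ ^ 2)} with hsset
  have hC₀ : 0 ≤ ‖Xt x₀ v₀‖ := norm_nonneg _
  have hsk : 0 ≤ Real.sqrt k := Real.sqrt_nonneg _
  have hne : ∀ β γ, (sset β γ).Nonempty := fun β γ => ⟨n0, Set.mem_insert _ _⟩
  have hub : ∀ β γ, ∃ C, ∀ r ∈ sset β γ, r ≤ C := by
    intro β γ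
    by_cases hP : ∃ β' γ' x v l, 0 ≤ β' ∧ β' ≤ β ∧ 0 < γ' ∧ γ' ≤ γ ∧
        Stmt8Aux.Sol T l₀ Xt Vt x₀ v₀ β' γ' x v l
    · obtain ⟨βs, γs, xs, vs, ls, hbs0, hbs1, hgs0, hgs1, sols⟩ := hP
      obtain ⟨M, hM⟩ := Stmt8Aux.getM sols
      have hM0 : 0 ≤ M := le_trans (norm_nonneg _) (hM 0 ⟨le_refl 0, hT.le⟩)
      have hβnn : 0 ≤ β := hbs0.trans hbs1
      have hγnn : 0 ≤ γ := hgs0.le.trans hgs1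
      have hSB0 : 0 ≤ γ / γs := div_nonneg hγnn hgs0.le
      have hT1 : 0 ≤ (β * (‖Xt x₀ v₀‖ + Q₀ * (γ / γs * M)) +
          Real.sqrt k * γ * Q₂ * ((1 + γ / γs) * M + l₀ ^ 2)) * T *
          Real.exp ((β * Q₀ + Real.sqrt k * γ * Q₂) * T) + γ / γs * M :=
        Stmt8Aux.kb_nonneg hC₀ hQ₀ hQ₂ hT.le hβnn hγnn hSB0 hM0 hsk
      have hT2 : 0 ≤ β * ‖Xt x₀ v₀‖ * T * Real.exp (β * Q₀ * T) :=
        mul_nonneg (mul_nonneg (mul_nonneg hβnn hC₀) hT.le) (Real.exp_pos _).le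
      refine ⟨n0 + (((β * (‖Xt x₀ v₀‖ + Q₀ * (γ / γs * M)) +
          Real.sqrt k * γ * Q₂ * ((1 + γ / γs) * M + l₀ ^ 2)) * T *
          Real.exp ((β * Q₀ + Real.sqrt k * γ * Q₂) * T) + γ / γs * M) +
          β * ‖Xt x₀ v₀‖ * T * Real.exp (β * Q₀ * T)), ?_⟩
      intro r hr
      simp only [hsset, Set.mem_insert_iff, Set.mem_setOf_eq] at hr
      rcases hr with rfl | ⟨β', γ', x, v, l, hb0, hb1, hg0, hg1, sol, t, ht, rfl⟩
      · linarith
      · rcases eq_or_lt_of_le hg0 with hg0' | hg0'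
        · obtain ⟨M', hM'⟩ := Stmt8Aux.getM sol
          have hkey := Stmt8Aux.key hT hl₀ hQ₀ hQ₂ hX hV hb0 hg0 sol sol le_rfl
            (by rw [← hg0', mul_zero]) hM' hb1 hg0'.ge le_rfl t ht
          simp only [zero_mul, mul_zero, add_zero, zero_add] at hkey
          linarith
        · have hσ0 : 0 ≤ γ' / γs := div_nonneg hg0 hgs0.le
          have hσγ : γ' / γs * γs = γ' := div_mul_cancel₀ _ (ne_of_gt hgs0)
          have hsSB : γ' / γs ≤ γ / γs := by gcongr
          have hkey := Stmt8Aux.key hT hl₀ hQ₀ hQ₂ hX hV hb0 hg0 sol sols hσ0 hσγ hM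
            hb1 hg1 hsSB t ht
          linarith
    · refine ⟨n0 + max 0 (β * ‖Xt x₀ v₀‖ * T * Real.exp (β * Q₀ * T)), ?_⟩
      intro r hr
      simp only [hsset, Set.mem_insert_iff, Set.mem_setOf_eq] at hr
      rcases hr with rfl | ⟨β', γ', x, v, l, hb0, hb1, hg0, hg1, sol, t, ht, rfl⟩
      · have := le_max_left (0:ℝ) (β * ‖Xt x₀ v₀‖ * T * Real.exp (β * Q₀ * T))
        linarith
      · have hg0' : (0:ℝ) = γ' := by
          by_contra h
          exact hP ⟨β', γ', x, v, l, hb0, hb1, lt_of_le_of_ne hg0 h, hg1, sol⟩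
        obtain ⟨M', hM'⟩ := Stmt8Aux.getM sol
        have hkey := Stmt8Aux.key hT hl₀ hQ₀ hQ₂ hX hV hb0 hg0 sol sol le_rfl
          (by rw [← hg0', mul_zero]) hM' hb1 hg0'.ge le_rfl t ht
        simp only [zero_mul, mul_zero, add_zero, zero_add] at hkey
        have := le_max_right (0:ℝ) (β * ‖Xt x₀ v₀‖ * T * Real.exp (β * Q₀ * T))
        linarith
  have hbdd : ∀ β γ, BddAbove (sset β γ) := by
    intro β γ
    obtain ⟨C, hC⟩ := hub β γ
    exact ⟨C, fun r hr => hC r hr⟩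
  refine ⟨fun β γ => sSup (sset β γ), ?_, ?_, ?_, ?_⟩
  · -- monotonicity
    intro β β' γ γ' _ hββ' _ hγγ'
    apply csSup_le_csSup (hbdd β' γ') (hne β γ)
    intro r hr
    simp only [hsset, Set.mem_insert_iff, Set.mem_setOf_eq] at hr ⊢
    rcases hr with rfl | ⟨a, b, x, v, l, h1, h2, h3, h4, h5, h6⟩
    · exact Or.inl rfl
    · exact Or.inr ⟨a, b, x, v, l, h1, h2.trans hββ', h3, h4.trans hγγ', h5, h6⟩
  · -- value at zero
    show sSup (sset 0 0) = n0
    have hset00 : sset 0 0 = {n0} := by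
      apply Set.Subset.antisymm
      · intro r hr
        simp only [hsset, Set.mem_insert_iff, Set.mem_setOf_eq] at hr
        rcases hr with rfl | ⟨β', γ', x, v, l, hb0, hb1, hg0, hg1, sol, t, ht, rfl⟩
        · exact Set.mem_singleton _
        · have hβ' : β' = 0 := le_antisymm hb1 hb0
          have hγ' : γ' = 0 := le_antisymm hg1 hg0
          rw [hβ'] at sol
          rw [hγ'] at sol
          rw [Set.mem_singleton_iff, hn0def]
          exact Stmt8Aux.const_of_sol00 hT sol t ht
      · intro r hr
        rw [Set.mem_singleton_iff] at hr
        rw [hr]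
        exact Set.mem_insert _ _
    rw [hset00]
    exact csSup_singleton n0
  · -- smallness for small parameters
    intro ε₀ hε₀
    by_cases hP : ∃ β' γ' x v l, 0 ≤ β' ∧ 0 < γ' ∧ Stmt8Aux.Sol T l₀ Xt Vt x₀ v₀ β' γ' x v l
    · obtain ⟨βs, γs, xs, vs, ls, hbs0, hgs0, sols⟩ := hP
      obtain ⟨M, hM⟩ := Stmt8Aux.getM sols
      have hM0 : 0 ≤ M := le_trans (norm_nonneg _) (hM 0 ⟨le_refl 0, hT.le⟩)
      set X1 := (‖Xt x₀ v₀‖ + Q₀ * M + Real.sqrt k * Q₂ * (2 * M + l₀ ^ 2)) * T *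
        Real.exp ((Q₀ + Real.sqrt k * Q₂) * T) + M / γs +
        ‖Xt x₀ v₀‖ * T * Real.exp (Q₀ * T) with hX1def
    -- nonnegativity of X1 pieces
      have hX1a : 0 ≤ (‖Xt x₀ v₀‖ + Q₀ * M + Real.sqrt k * Q₂ * (2 * M + l₀ ^ 2)) * T *
          Real.exp ((Q₀ + Real.sqrt k * Q₂) * T) := by
        apply mul_nonneg (mul_nonneg _ hT.le) (Real.exp_pos _).le
        have h1 : 0 ≤ Q₀ * M := mul_nonneg hQ₀ hM0
        have h2 : 0 ≤ Real.sqrt k * Q₂ * (2 * M + l₀ ^ 2) :=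
          mul_nonneg (mul_nonneg hsk hQ₂) (by nlinarith [sq_nonneg l₀])
        linarith
      have hX1b : 0 ≤ M / γs := div_nonneg hM0 hgs0.le
      have hX1c : 0 ≤ ‖Xt x₀ v₀‖ * T * Real.exp (Q₀ * T) :=
        mul_nonneg (mul_nonneg hC₀ hT.le) (Real.exp_pos _).le
      have hX1nn : 0 ≤ X1 := by rw [hX1def]; linarith
      refine ⟨min (min 1 γs) (ε₀ / (X1 + 1)), ⟨lt_min (lt_min one_pos hgs0)
        (div_pos hε₀ (by linarith)), ?_⟩⟩
      intro β γ hβ0 hβδ hγ0 hγδ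
      set δm := min (min 1 γs) (ε₀ / (X1 + 1)) with hδmdef
      have hδm0 : 0 ≤ δm := le_trans hβ0 hβδ
      have hδm1 : δm ≤ 1 := le_trans (min_le_left _ _) (min_le_left _ _)
      have hδmγs : δm ≤ γs := le_trans (min_le_left _ _) (min_le_right _ _)
      have hδmε : δm * (X1 + 1) ≤ ε₀ := by
        have h1 : δm ≤ ε₀ / (X1 + 1) := min_le_right _ _
        have h2 : (0:ℝ) < X1 + 1 := by linarith
        calc δm * (X1 + 1) ≤ ε₀ / (X1 + 1) * (X1 + 1) :=
              mul_le_mul_of_nonneg_right h1 h2.le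
          _ = ε₀ := div_mul_cancel₀ _ (ne_of_gt h2)
      apply csSup_le (hne β γ)
      intro r hr
      simp only [hsset, Set.mem_insert_iff, Set.mem_setOf_eq] at hr
      rcases hr with rfl | ⟨β', γ', x, v, l, hb0, hb1, hg0, hg1, sol, t, ht, rfl⟩
      · linarith
      · have hbδ : β' ≤ δm := hb1.trans hβδ
        have hgδ : γ' ≤ δm := hg1.trans hγδ
        rcases eq_or_lt_of_le hg0 with hg0' | hg0'
        · obtain ⟨M', hM'⟩ := Stmt8Aux.getM sol
          have hkey := Stmt8Aux.key hT hl₀ hQ₀ hQ₂ hX hV hb0 hg0 sol sol le_rfl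
            (by rw [← hg0', mul_zero]) hM' hbδ hg0'.ge le_rfl t ht
          simp only [zero_mul, mul_zero, add_zero, zero_add] at hkey
          have hch := Stmt8Aux.chain0 hC₀ hQ₀ hT.le hδm0 hδm1
            (X := X1) (by rw [hX1def]; linarith) hδmε
          linarith
        · have hσ0 : 0 ≤ γ' / γs := div_nonneg hg0 hgs0.le
          have hσγ : γ' / γs * γs = γ' := div_mul_cancel₀ _ (ne_of_gt hgs0)
          have hsSB : γ' / γs ≤ δm / γs := by gcongr
          have hkey := Stmt8Aux.key hT hl₀ hQ₀ hQ₂ hX hV hb0 hg0 sol sols hσ0 hσγ hM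
            hbδ hgδ hsSB t ht
          have hδε1 : δm * (((‖Xt x₀ v₀‖ + Q₀ * M + Real.sqrt k * Q₂ * (2 * M + l₀ ^ 2)) * T *
              Real.exp ((Q₀ + Real.sqrt k * Q₂) * T) + M / γs) + 1) ≤ ε₀ := by
            have h1 : δm * (((‖Xt x₀ v₀‖ + Q₀ * M + Real.sqrt k * Q₂ * (2 * M + l₀ ^ 2)) * T *
                Real.exp ((Q₀ + Real.sqrt k * Q₂) * T) + M / γs) + 1) ≤ δm * (X1 + 1) := by
              apply mul_le_mul_of_nonneg_left _ hδm0
              rw [hX1def]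
              linarith
            exact h1.trans hδmε
          have hch := Stmt8Aux.chain1 hC₀ hQ₀ hQ₂ hT.le hsk hM0 hgs0 hδm0 hδm1 hδmγs
            (ε₀ := ε₀) (l0 := l₀) hδε1
          linarith
    · -- no solutions with positive γ at all
      set X0 := ‖Xt x₀ v₀‖ * T * Real.exp (Q₀ * T) with hX0def
      have hX0nn : 0 ≤ X0 :=
        mul_nonneg (mul_nonneg hC₀ hT.le) (Real.exp_pos _).le
      refine ⟨min 1 (ε₀ / (X0 + 1)), ⟨lt_min one_pos (div_pos hε₀ (by linarith)), ?_⟩⟩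
      intro β γ hβ0 hβδ hγ0 hγδ
      set δm := min 1 (ε₀ / (X0 + 1)) with hδmdef
      have hδm0 : 0 ≤ δm := le_trans hβ0 hβδ
      have hδm1 : δm ≤ 1 := min_le_left _ _
      have hδmε : δm * (X0 + 1) ≤ ε₀ := by
        have h1 : δm ≤ ε₀ / (X0 + 1) := min_le_right _ _
        have h2 : (0:ℝ) < X0 + 1 := by linarith
        calc δm * (X0 + 1) ≤ ε₀ / (X0 + 1) * (X0 + 1) :=
              mul_le_mul_of_nonneg_right h1 h2.le
          _ = ε₀ := div_mul_cancel₀ _ (ne_of_gt h2)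
      apply csSup_le (hne β γ)
      intro r hr
      simp only [hsset, Set.mem_insert_iff, Set.mem_setOf_eq] at hr
      rcases hr with rfl | ⟨β', γ', x, v, l, hb0, hb1, hg0, hg1, sol, t, ht, rfl⟩
      · linarith
      · have hg0' : (0:ℝ) = γ' := by
          by_contra h
          exact hP ⟨β', γ', x, v, l, hb0, lt_of_le_of_ne hg0 h, sol⟩
        obtain ⟨M', hM'⟩ := Stmt8Aux.getM sol
        have hkey := Stmt8Aux.key hT hl₀ hQ₀ hQ₂ hX hV hb0 hg0 sol sol le_rfl
          (by rw [← hg0', mul_zero]) hM' (hb1.trans hβδ) hg0'.ge le_rfl t ht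
        simp only [zero_mul, mul_zero, add_zero, zero_add] at hkey
        have hch := Stmt8Aux.chain0 hC₀ hQ₀ hT.le hδm0 hδm1 (X := X0) (by rw [hX0def]) hδmε
        linarith
  · -- the bound on solutions
    intro β γ x v l hβ hγ hx0 hv0 hl0 hdx hdv hdl t ht
    apply le_csSup (hbdd β γ)
    simp only [hsset, Set.mem_insert_iff, Set.mem_setOf_eq]
    exact Or.inr ⟨β, γ, x, v, l, hβ, le_refl _, hγ, le_refl _, ⟨hx0, hv0, hl0, hdx, hdv, hdl⟩,
      t, ht, rfl⟩
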